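/- If T is a tournament of order n, then n/2 ≤ dc(T)·dac(T). -/

import Mathlib

/-- The subset `S` of vertices induces an acyclic subdigraph of the digraph with
arc relation `A` (i.e. there is no directed cycle all of whose vertices lie in `S`). -/
def AcyclicSet {V : Type*} (A : V → V → Prop) (S : Set V) : Prop :=
  ∀ v : V, ¬ Relation.TransGen (fun x y => x ∈ S ∧ y ∈ S ∧ A x y) v v

/-- `c` is an acyclic vertex coloring of the digraph `A` with `k` colors:
`c` is surjective and every chromatic class induces an acyclic subdigraph. -/
def IsAcyclicColoring {V : Type*} (A : V → V → Prop) {k : ℕ} (c : V → Fin k) : Prop :=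
  Function.Surjective c ∧ ∀ i : Fin k, AcyclicSet A {v | c v = i}

/-- `c` is a complete vertex coloring of the digraph `A` with `k` colors:
`c` is surjective and for every ordered pair of distinct colors `(i, j)` there is
an arc `(u, v)` with `c u = i` and `c v = j`. -/
def IsCompleteColoring {V : Type*} (A : V → V → Prop) {k : ℕ} (c : V → Fin k) : Prop :=
  Function.Surjective c ∧
    ∀ i j : Fin k, i ≠ j → ∃ u v : V, A u v ∧ c u = i ∧ c v = j

/-- The diachromatic number: the largest `k` admitting a complete acyclic `k`-coloring. -/
noncomputable def dac {V : Type*} (A : V → V → Prop) : ℕ :=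
  sSup {k | ∃ c : V → Fin k, IsAcyclicColoring A c ∧ IsCompleteColoring A c}

/-- The dichromatic number: the smallest `k` admitting an acyclic `k`-coloring. -/
noncomputable def dc {V : Type*} (A : V → V → Prop) : ℕ :=
  sInf {k | ∃ c : V → Fin k, IsAcyclicColoring A c}

/-- The pseudoachromatic number: the largest `k` admitting a complete `k`-coloring. -/
noncomputable def psi {V : Type*} (A : V → V → Prop) : ℕ :=
  sSup {k | ∃ c : V → Fin k, IsCompleteColoring A c}

/-- `A` is a tournament: no loops, and for distinct vertices exactly one of the
two possible arcs is present. -/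
def IsTournament {V : Type*} (A : V → V → Prop) : Prop :=
  (∀ v : V, ¬ A v v) ∧ ∀ u v : V, u ≠ v → (A u v ↔ ¬ A v u)

lemma acyclic_mono {V : Type*} {A : V → V → Prop} {S T : Set V} (h : S ⊆ T)
    (hT : AcyclicSet A T) : AcyclicSet A S := by
  intro v hv
  exact hT v (Relation.TransGen.mono (r := fun x y => x ∈ S ∧ y ∈ S ∧ A x y)
    (p := fun x y => x ∈ T ∧ y ∈ T ∧ A x y) (fun x y ⟨hx, hy, ha⟩ => ⟨h hx, h hy, ha⟩) v v hv)

lemma acyclic_singleton {V : Type*} {A : V → V → Prop} (hirr : ∀ v, ¬ A v v) (w : V) :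
    AcyclicSet A {w} := by
  intro v hv
  have h2 : Relation.TransGen (fun (_ _ : V) => False) v v := by
    refine Relation.TransGen.mono (r := fun x y => x ∈ ({w} : Set V) ∧ y ∈ ({w} : Set V) ∧ A x y)
      (p := fun (_ _ : V) => False) ?_ v v hv
    rintro x y ⟨hx, hy, ha⟩
    simp only [Set.mem_singleton_iff] at hx hy
    subst hx; subst hy
    exact hirr _ ha
  cases h2 with
  | single h => exact h
  | tail _ h => exact h

lemma acyclic_union {V : Type*} {A : V → V → Prop} {X Y : Set V}
    (hX : AcyclicSet A X) (hY : AcyclicSet A Y)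
    (hdisj : ∀ v, v ∈ X → v ∈ Y → False)
    (harc : ∀ u v, u ∈ X → v ∈ Y → ¬ A v u) :
    AcyclicSet A (X ∪ Y) := by
  intro v hv
  set r := fun x y => x ∈ X ∪ Y ∧ y ∈ X ∪ Y ∧ A x y with hr
  set rX := fun x y => x ∈ X ∧ y ∈ X ∧ A x y with hrX
  set rY := fun x y => x ∈ Y ∧ y ∈ Y ∧ A x y with hrY
  have key : ∀ w, Relation.TransGen r v w →
      (w ∈ X ∧ v ∈ X ∧ Relation.TransGen rX v w) ∨
      (w ∈ Y ∧ (v ∈ Y → Relation.TransGen rY v w)) := by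
    intro w hw
    induction hw with
    | single h =>
      obtain ⟨hv', hb, ha⟩ := h
      rcases hb with hbX | hbY
      · have hvX : v ∈ X := by
          rcases hv' with h1 | h1
          · exact h1
          · exact absurd ha (harc _ _ hbX h1)
        exact Or.inl ⟨hbX, hvX, Relation.TransGen.single ⟨hvX, hbX, ha⟩⟩
      · exact Or.inr ⟨hbY, fun hvY => Relation.TransGen.single ⟨hvY, hbY, ha⟩⟩
    | tail _ h ih =>
      obtain ⟨hw', hu, ha⟩ := h
      rcases ih with ⟨hwX, hvX, htg⟩ | ⟨hwY, htg⟩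
      · rcases hu with huX | huY
        · exact Or.inl ⟨huX, hvX, htg.tail ⟨hwX, huX, ha⟩⟩
        · exact Or.inr ⟨huY, fun hvY => absurd (hdisj _ hvX hvY) not_false⟩
      · rcases hu with huX | huY
        · exact absurd ha (harc _ _ huX hwY)
        · exact Or.inr ⟨huY, fun hvY => (htg hvY).tail ⟨hwY, huY, ha⟩⟩
  rcases key v hv with ⟨_, _, htg⟩ | ⟨hvY, htg⟩
  · exact hX v htg
  · exact hY v (htg hvY)

lemma le_dac {V : Type*} [Fintype V] {A : V → V → Prop} {k : ℕ} (c : V → Fin k)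
    (h1 : IsAcyclicColoring A c) (h2 : IsCompleteColoring A c) : k ≤ dac A := by
  apply le_csSup
  · refine ⟨Fintype.card V, ?_⟩
    rintro m ⟨c', ⟨hs, _⟩, _⟩
    simpa using Fintype.card_le_of_surjective c' hs
  · exact ⟨c, h1, h2⟩

lemma merge_main {V : Type*} [Fintype V] {A : V → V → Prop} (hT : IsTournament A) :
    ∀ k : ℕ, ∀ c : V → Fin k, IsAcyclicColoring A c →
      ∀ r : ℕ, ∀ f : Fin r → Fin k, Function.Injective f →
      (∀ a b : Fin r, a ≠ b → ∃ u v : V, A u v ∧ c u = f a ∧ c v = f b) → r ≤ dac A := by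
  intro k
  induction k using Nat.strong_induction_on with
  | _ k ih =>
  intro c hc r f hf harc
  by_cases hcomp : ∀ i j : Fin k, i ≠ j → ∃ u v : V, A u v ∧ c u = i ∧ c v = j
  · have hk : k ≤ dac A := le_dac c hc ⟨hc.1, hcomp⟩
    have hrk : r ≤ k := by simpa using Fintype.card_le_of_injective f hf
    omega
  · push_neg at hcomp
    obtain ⟨i, j, hij, hno⟩ := hcomp
    -- hno : ∀ u v, A u v → c u = i → c v ≠ j
    obtain ⟨k', rfl⟩ : ∃ k', k = k' + 1 := ⟨k - 1, by omega⟩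
    set E : {x : Fin (k' + 1) // x ≠ j} ≃ Fin k' := (finSuccAboveEquiv j).symm with hE
    have hne : ∀ x : Fin (k' + 1), (if x = j then i else x) ≠ j := by
      intro x; split
      · exact hij
      · assumption
    set g : Fin (k' + 1) → Fin k' := fun x => E ⟨if x = j then i else x, hne x⟩ with hg
    have hginj : ∀ x y : Fin (k' + 1), g x = g y →
        (if x = j then i else x) = (if y = j then i else y) := by
      intro x y h
      have := E.injective h
      exact congrArg Subtype.val this
    set c' : V → Fin k' := g ∘ c with hc'
    -- fibers of c'
    have hfiber : ∀ y : Fin k', {v | c' v = y} =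
        {v | (if c v = j then i else c v) = ((E.symm y) : Fin (k'+1))} := by
      intro y
      ext v
      simp only [Set.mem_setOf_eq, hc', Function.comp_apply, hg]
      constructor
      · intro h
        have : (⟨if c v = j then i else c v, hne (c v)⟩ : {x : Fin (k'+1) // x ≠ j}) = E.symm y := by
          rw [← h]; exact (E.symm_apply_apply _).symm
        exact congrArg Subtype.val this
      · intro h
        have : (⟨if c v = j then i else c v, hne (c v)⟩ : {x : Fin (k'+1) // x ≠ j}) = E.symm y :=
          Subtype.ext h
        rw [this, E.apply_symm_apply]
    have hsurj : Function.Surjective c' := by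
      intro y
      obtain ⟨v, hv⟩ := hc.1 ((E.symm y) : Fin (k'+1))
      refine ⟨v, ?_⟩
      have : v ∈ {v | c' v = y} := by
        rw [hfiber y]
        show (if c v = j then i else c v) = _
        rw [hv, if_neg (E.symm y).2]
      exact this
    have hacyc : ∀ y : Fin k', AcyclicSet A {v | c' v = y} := by
      intro y
      rw [hfiber y]
      by_cases hyi : ((E.symm y) : Fin (k'+1)) = i
      · have heq : {v | (if c v = j then i else c v) = ((E.symm y) : Fin (k'+1))} =
            {v | c v = j} ∪ {v | c v = i} := by
          ext v
          simp only [Set.mem_setOf_eq, Set.mem_union, hyi]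
          by_cases hcv : c v = j
          · rw [if_pos hcv]; simp [hcv]
          · rw [if_neg hcv]; tauto
        rw [heq]
        refine acyclic_union (hc.2 j) (hc.2 i) ?_ ?_
        · intro v h1 h2
          simp only [Set.mem_setOf_eq] at h1 h2
          exact hij (h2.symm.trans h1)
        · intro u v hu hvv hA
          simp only [Set.mem_setOf_eq] at hu hvv
          exact hno v u hA hvv hu
      · have heq : {v | (if c v = j then i else c v) = ((E.symm y) : Fin (k'+1))} =
            {v | c v = ((E.symm y) : Fin (k'+1))} := by
          ext v
          simp only [Set.mem_setOf_eq]
          by_cases hcv : c v = j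
          · rw [hcv, if_pos rfl]
            constructor
            · intro h; exact absurd h.symm hyi
            · intro h; exact absurd h.symm (E.symm y).2
          · rw [if_neg hcv]
        rw [heq]
        exact hc.2 _
    -- marked map
    set f' : Fin r → Fin k' := g ∘ f with hf'
    have hnotboth : ¬ ∃ a b : Fin r, f a = i ∧ f b = j := by
      rintro ⟨a, b, ha, hb⟩
      have hab : a ≠ b := by
        intro h
        apply hij
        rw [← ha, h, hb]
      obtain ⟨u, v, hA, hu, hv⟩ := harc a b hab
      exact hno u v hA (hu.trans ha) (hv.trans hb)
    have hf'inj : Function.Injective f' := by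
      intro a b h
      have h2 := hginj _ _ h
      by_cases ha : f a = j <;> by_cases hb : f b = j
      · exact hf (ha.trans hb.symm)
      · rw [if_pos ha, if_neg hb] at h2
        exact absurd ⟨b, a, h2.symm, ha⟩ hnotboth
      · rw [if_neg ha, if_pos hb] at h2
        exact absurd ⟨a, b, h2, hb⟩ hnotboth
      · rw [if_neg ha, if_neg hb] at h2
        exact hf h2
    have harc' : ∀ a b : Fin r, a ≠ b → ∃ u v : V, A u v ∧ c' u = f' a ∧ c' v = f' b := by
      intro a b hab
      obtain ⟨u, v, hA, hu, hv⟩ := harc a b hab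
      exact ⟨u, v, hA, congrArg g hu, congrArg g hv⟩
    exact ih k' (by omega) c' ⟨hsurj, hacyc⟩ r f' hf'inj harc'

lemma pairing {V : Type*} [Fintype V] {A : V → V → Prop} (hT : IsTournament A)
    (S : Finset V) (hS : AcyclicSet A (↑S : Set V)) : S.card ≤ 2 * dac A := by
  classical
  set m := S.card with hm
  -- strict total order on the subtype
  set rS : {x // x ∈ S} → {x // x ∈ S} → Prop := fun x y => A x.1 y.1 with hrS
  have hirr : ∀ v : V, ¬ A v v := hT.1
  have htrans : ∀ x y z : {x // x ∈ S}, rS x y → rS y z → rS x z := by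
    intro x y z hxy hyz
    have hxy' : A x.1 y.1 := hxy
    have hyz' : A y.1 z.1 := hyz
    show A x.1 z.1
    have hxyne : x.1 ≠ y.1 := by rintro h; rw [h] at hxy'; exact hirr _ hxy'
    have hyzne : y.1 ≠ z.1 := by rintro h; rw [h] at hyz'; exact hirr _ hyz'
    by_cases hxz : x.1 = z.1
    · exfalso
      rw [hxz] at hxy'
      exact (hT.2 _ _ hyzne).mp hyz' hxy'
    · by_contra hA
      have hzx : A z.1 x.1 := by
        by_contra hzx
        exact hA ((hT.2 _ _ hxz).mpr hzx)
      -- 3-cycle x → y → z → x within S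
      refine hS x.1 ?_
      refine Relation.TransGen.tail (b := z.1) ?_ ⟨z.2, x.2, hzx⟩
      refine Relation.TransGen.tail (b := y.1) ?_ ⟨y.2, z.2, hyz'⟩
      exact Relation.TransGen.single ⟨x.2, y.2, hxy'⟩
  have hsto : IsStrictTotalOrder {x // x ∈ S} rS :=
    { trichotomous := by
        intro x y
        rcases eq_or_ne x y with h | h
        · exact fun _ _ => h
        · have hne : x.1 ≠ y.1 := fun hh => h (Subtype.ext hh)
          by_cases hxy : A x.1 y.1
          · exact fun h1 _ => absurd hxy h1
          · refine fun _ h2 => absurd ?_ h2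
            show A y.1 x.1
            exact (hT.2 _ _ hne.symm).mpr hxy
      irrefl := fun x h => hirr _ h
      trans := htrans }
  letI : DecidableRel rS := fun x y => Classical.dec _
  letI : LinearOrder {x // x ∈ S} := linearOrderOfSTO rS
  have hlt : ∀ x y : {x // x ∈ S}, x < y ↔ rS x y := fun x y => Iff.rfl
  have hcard : Fintype.card {x // x ∈ S} = m := by
    rw [Fintype.card_coe]
  let e := monoEquivOfFin {x // x ∈ S} hcard
  set t := Fintype.card {x : V // x ∉ S} with ht
  let eO : {x : V // x ∉ S} ≃ Fin t := Fintype.equivFin _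
  set r0 := (m + 1) / 2 with hr0
  have hpidx : ∀ i : ℕ, i < m → min i (m - 1 - i) < r0 := by
    intro i hi
    rcases Nat.le_total i (m - 1 - i) with h | h
    · rw [min_eq_left h]; omega
    · rw [min_eq_right h]; omega
  let c : V → Fin (r0 + t) := fun v =>
    if h : v ∈ S then
      Fin.castAdd t ⟨min (e.symm ⟨v, h⟩).val (m - 1 - (e.symm ⟨v, h⟩).val),
        hpidx _ (e.symm ⟨v, h⟩).isLt⟩
    else Fin.natAdd r0 (eO ⟨v, h⟩)
  -- value of c on elements of S given by index
  have hcS : ∀ (i : Fin m), (c (e i).1).val = min i.val (m - 1 - i.val) := by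
    intro i
    have h : (e i).1 ∈ S := (e i).2
    have h1 : c (e i).1 = Fin.castAdd t ⟨min (e.symm ⟨(e i).1, h⟩).val
        (m - 1 - (e.symm ⟨(e i).1, h⟩).val), hpidx _ (e.symm ⟨(e i).1, h⟩).isLt⟩ :=
      dif_pos h
    have h2 : e.symm ⟨(e i).1, h⟩ = i := by
      have h3 : (⟨(e i).1, h⟩ : {x // x ∈ S}) = e i := Subtype.ext rfl
      rw [h3]; exact e.symm_apply_apply i
    rw [h1]
    show min (e.symm ⟨(e i).1, h⟩).val (m - 1 - (e.symm ⟨(e i).1, h⟩).val) = _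
    rw [h2]
  have hcO : ∀ (v : V) (h : v ∉ S), c v = Fin.natAdd r0 (eO ⟨v, h⟩) := by
    intro v h
    exact dif_neg h
  have hsurj : Function.Surjective c := by
    intro y
    by_cases hy : y.val < r0
    · have hym : y.val < m := by omega
      refine ⟨(e ⟨y.val, hym⟩).1, ?_⟩
      apply Fin.ext
      rw [hcS ⟨y.val, hym⟩]
      show min y.val (m - 1 - y.val) = y.val
      have : 2 * y.val < m := by
        rcases Nat.lt_or_ge (2 * y.val) m with h | h
        · exact h
        · exfalso; omega
      rw [min_eq_left (by omega)]
    · have hyt : y.val - r0 < t := by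
        have := y.isLt; omega
      refine ⟨(eO.symm ⟨y.val - r0, hyt⟩).1, ?_⟩
      rw [hcO _ (eO.symm ⟨y.val - r0, hyt⟩).2]
      apply Fin.ext
      show r0 + (eO ⟨(eO.symm ⟨y.val - r0, hyt⟩).1, _⟩).val = y.val
      rw [show (⟨(eO.symm ⟨y.val - r0, hyt⟩).1, _⟩ : {x : V // x ∉ S}) =
        eO.symm ⟨y.val - r0, hyt⟩ from Subtype.ext rfl, eO.apply_symm_apply]
      show r0 + (y.val - r0) = y.val
      omega
  have hacyc : ∀ y : Fin (r0 + t), AcyclicSet A {v | c v = y} := by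
    intro y
    by_cases hy : y.val < r0
    · refine acyclic_mono ?_ hS
      intro v hv
      simp only [Set.mem_setOf_eq] at hv
      by_contra hvS
      have := hcO v hvS
      rw [this] at hv
      have : r0 + (eO ⟨v, hvS⟩).val = y.val := congrArg Fin.val hv
      omega
    · -- singleton fiber
      refine acyclic_mono (T := {(eO.symm ⟨y.val - r0, by have := y.isLt; omega⟩).1}) ?_
        (acyclic_singleton hirr _)
      intro v hv
      simp only [Set.mem_setOf_eq] at hv
      by_cases hvS : v ∈ S
      · exfalso
        have : (c v).val = min (e.symm ⟨v, hvS⟩).val (m - 1 - (e.symm ⟨v, hvS⟩).val) := by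
          rw [show c v = Fin.castAdd t ⟨min (e.symm ⟨v, hvS⟩).val
              (m - 1 - (e.symm ⟨v, hvS⟩).val), hpidx _ (e.symm ⟨v, hvS⟩).isLt⟩
            from dif_pos hvS]
          rfl
        rw [hv] at this
        have h2 := hpidx (e.symm ⟨v, hvS⟩).val (e.symm ⟨v, hvS⟩).isLt
        omega
      · rw [hcO v hvS] at hv
        have hval : r0 + (eO ⟨v, hvS⟩).val = y.val := congrArg Fin.val hv
        have : eO ⟨v, hvS⟩ = ⟨y.val - r0, by have := y.isLt; omega⟩ := by
          apply Fin.ext; show (eO ⟨v, hvS⟩).val = y.val - r0; omega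
        have : (⟨v, hvS⟩ : {x : V // x ∉ S}) = eO.symm ⟨y.val - r0, by have := y.isLt; omega⟩ := by
          rw [← this, eO.symm_apply_apply]
        show v ∈ ({(eO.symm ⟨y.val - r0, by have := y.isLt; omega⟩).1} : Set V)
        rw [Set.mem_singleton_iff, ← this]
  -- marked classes
  have hmono : ∀ i j : Fin m, i < j → A (e i).1 (e j).1 := by
    intro i j hij
    exact (hlt _ _).mp (e.lt_iff_lt.mpr hij)
  have h2a : ∀ a : Fin r0, 2 * a.val < m := by
    intro a
    have := a.isLt
    omega
  have hcval : ∀ (i : ℕ) (hi : i < m) (hmin : min i (m - 1 - i) = i),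
      c (e ⟨i, hi⟩).1 = Fin.castAdd t ⟨i, hmin ▸ hpidx i hi⟩ := by
    intro i hi hmin
    apply Fin.ext
    rw [hcS ⟨i, hi⟩]
    exact hmin
  have harcs : ∀ a b : Fin r0, a ≠ b →
      ∃ u v : V, A u v ∧ c u = Fin.castAdd t a ∧ c v = Fin.castAdd t b := by
    intro a b hab
    have hane : a.val ≠ b.val := fun h => hab (Fin.ext h)
    have ham : a.val < m := by have := h2a a; omega
    have hbm : b.val < m := by have := h2a b; omega
    rcases Nat.lt_or_ge a.val b.val with h | h
    · refine ⟨(e ⟨a.val, ham⟩).1, (e ⟨b.val, hbm⟩).1, hmono _ _ h, ?_, ?_⟩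
      · rw [hcval a.val ham (by have := h2a a; omega)]
      · rw [hcval b.val hbm (by have := h2a b; omega)]
    · have hba : b.val < a.val := by omega
      have hkey : a.val < m - 1 - b.val := by
        have := h2a a; have := h2a b; omega
      have hbm2 : m - 1 - b.val < m := by omega
      refine ⟨(e ⟨a.val, ham⟩).1, (e ⟨m - 1 - b.val, hbm2⟩).1, hmono _ _ hkey, ?_, ?_⟩
      · rw [hcval a.val ham (by have := h2a a; omega)]
      · apply Fin.ext
        rw [hcS ⟨m - 1 - b.val, hbm2⟩]
        show min (m - 1 - b.val) (m - 1 - (m - 1 - b.val)) = b.val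
        have := h2a b
        have : m - 1 - (m - 1 - b.val) = b.val := by omega
        rw [this, min_eq_right (by omega)]
  have hfinj : Function.Injective (fun a : Fin r0 => Fin.castAdd t a) := by
    intro a b h
    have h2 : Fin.castAdd t a = Fin.castAdd t b := h
    have h3 : (Fin.castAdd t a).val = (Fin.castAdd t b).val := congrArg Fin.val h2
    rw [Fin.coe_castAdd, Fin.coe_castAdd] at h3
    exact Fin.ext h3
  have := merge_main hT (r0 + t) c ⟨hsurj, hacyc⟩ r0 _ hfinj harcs
  omega

lemma exists_big_fiber {V : Type*} [Fintype V] {k : ℕ} (c : V → Fin k) (hk : 0 < k) :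
    ∃ i : Fin k, Fintype.card V ≤ k * (Finset.univ.filter (fun v => c v = i)).card := by
  classical
  have hsum : Fintype.card V = ∑ i : Fin k, (Finset.univ.filter (fun v => c v = i)).card := by
    rw [← Finset.card_univ]
    exact Finset.card_eq_sum_card_fiberwise (fun x _ => Finset.mem_univ (c x))
  obtain ⟨i0, -, hmax⟩ := Finset.exists_max_image Finset.univ
    (fun i => (Finset.univ.filter (fun v => c v = i)).card) ⟨⟨0, hk⟩, Finset.mem_univ _⟩
  refine ⟨i0, ?_⟩
  rw [hsum]
  calc ∑ i : Fin k, (Finset.univ.filter (fun v => c v = i)).card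
      ≤ Finset.univ.card • (Finset.univ.filter (fun v => c v = i0)).card :=
        Finset.sum_le_card_nsmul _ _ _ (fun x hx => hmax x hx)
    _ = k * (Finset.univ.filter (fun v => c v = i0)).card := by
        rw [Finset.card_univ, Fintype.card_fin, smul_eq_mul]

/-- If `T` is a tournament of order `n`, then `n/2 ≤ dc(T)·dac(T)`. -/
theorem stmt14 {V : Type*} [Fintype V] (A : V → V → Prop)
    (hT : IsTournament A) :
    (Fintype.card V : ℝ) / 2 ≤ (dc A : ℝ) * (dac A : ℝ) := by
  classical
  rcases Nat.eq_zero_or_pos (Fintype.card V) with h0 | hpos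
  · rw [h0]
    simp only [Nat.cast_zero, zero_div]
    positivity
  · have hne : Nonempty V := Fintype.card_pos_iff.mp hpos
    have hmem : Fintype.card V ∈ {k | ∃ c : V → Fin k, IsAcyclicColoring A c} := by
      refine ⟨Fintype.equivFin V, (Fintype.equivFin V).surjective, ?_⟩
      intro i
      refine acyclic_mono (T := {(Fintype.equivFin V).symm i}) ?_ (acyclic_singleton hT.1 _)
      intro v hv
      simp only [Set.mem_setOf_eq] at hv
      rw [Set.mem_singleton_iff, ← hv, Equiv.symm_apply_apply]
    have hdcmem : dc A ∈ {k | ∃ c : V → Fin k, IsAcyclicColoring A c} :=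
      Nat.sInf_mem ⟨_, hmem⟩
    obtain ⟨c, hc⟩ := hdcmem
    have hkpos : 0 < dc A := by
      rcases Nat.eq_zero_or_pos (dc A) with h | h
      · exfalso
        obtain ⟨v⟩ := hne
        have hv := c v
        rw [h] at hv
        exact hv.elim0
      · exact h
    obtain ⟨i0, hi0⟩ := exists_big_fiber c hkpos
    set S := Finset.univ.filter (fun v => c v = i0) with hSdef
    have hSacyc : AcyclicSet A (↑S : Set V) := by
      have hset : (↑S : Set V) = {v | c v = i0} := by
        ext v; simp [hSdef]
      rw [hset]; exact hc.2 i0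
    have h2 := pairing hT S hSacyc
    have h3 : Fintype.card V ≤ dc A * (2 * dac A) :=
      le_trans hi0 (Nat.mul_le_mul_left _ h2)
    have h4 : (Fintype.card V : ℝ) ≤ (dc A : ℝ) * (2 * (dac A : ℝ)) := by exact_mod_cast h3
    linarith
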